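/- Let f = x₀²y₀ − (x₀+x₁)²y₁ + x₁²y₂ and let J be the saturation of the ideal generated by Ann(f)₂ in k[α₀,α₁,β₀,β₁,β₂]. Then β₀, β₁, β₂ ∈ J, so the Hilbert function of Sym V*/J in degree 1 is at most 2. -/

import Mathlib

open MvPolynomial
open Pointwise

noncomputable section

/-- The differential operator with constant coefficients corresponding to a monomial
exponent `m` (composition of partial derivatives). -/
def monOp (k : Type*) [CommSemiring k] {n : ℕ} (m : Fin n →₀ ℕ) :
    Module.End k (MvPolynomial (Fin n) k) :=
  (List.ofFn fun i : Fin n =>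
    ((pderiv i).toLinearMap : Module.End k (MvPolynomial (Fin n) k)) ^ m i).prod

/-- Apolarity contraction: the linear map `θ ↦ θ ⌟ f`, where a dual polynomial `θ`
acts on `f` as a differential operator with constant coefficients. -/
def contractMap {k : Type*} [CommSemiring k] {n : ℕ} (f : MvPolynomial (Fin n) k) :
    MvPolynomial (Fin n) k →ₗ[k] MvPolynomial (Fin n) k :=
  Finsupp.lsum k (fun m => LinearMap.toSpanSingleton k _ ((monOp k m) f)) ∘ₗ
    (AddMonoidAlgebra.coeffLinearEquiv k).toLinearMap

/-- The irrelevant maximal ideal `(X 0, …, X (n-1))`. -/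
def irrel (k : Type*) [CommSemiring k] (n : ℕ) : Ideal (MvPolynomial (Fin n) k) :=
  Ideal.span (Set.range X)

/-- Saturation of an ideal with respect to the irrelevant maximal ideal. -/
def satur {k : Type*} [CommRing k] {n : ℕ} (I : Ideal (MvPolynomial (Fin n) k)) :
    Ideal (MvPolynomial (Fin n) k) :=
  ⨆ m : ℕ, Submodule.colon I ((irrel k n ^ m : Ideal (MvPolynomial (Fin n) k)) : Submodule _ _)

/-- An ideal is saturated (with respect to the irrelevant maximal ideal). -/
def IsSat {k : Type*} [CommRing k] {n : ℕ} (I : Ideal (MvPolynomial (Fin n) k)) : Prop :=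
  Submodule.colon I ((irrel k n : Ideal _) : Submodule _ _) ≤ I

/-- An ideal is homogeneous. -/
def IsHomogIdeal {k : Type*} [CommSemiring k] {n : ℕ}
    (I : Ideal (MvPolynomial (Fin n) k)) : Prop :=
  ∀ g ∈ I, ∀ j : ℕ, homogeneousComponent j g ∈ I

/-- Hilbert function of `S/I` in degree `i`. -/
def HFq (k : Type*) [Field k] {n : ℕ} (I : Ideal (MvPolynomial (Fin n) k)) (i : ℕ) : ℕ :=
  Module.finrank k (homogeneousSubmodule (Fin n) k i) -
    Module.finrank k (Submodule.restrictScalars k I ⊓ homogeneousSubmodule (Fin n) k i :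
      Submodule k (MvPolynomial (Fin n) k))

/-- Hilbert function of the apolar algebra `Sym V⋆ / Ann(f)` in degree `i`. -/
def HFapolar {k : Type*} [Field k] {n : ℕ} (f : MvPolynomial (Fin n) k) (i : ℕ) : ℕ :=
  Module.finrank k (homogeneousSubmodule (Fin n) k i) -
    Module.finrank k (LinearMap.ker (contractMap f) ⊓ homogeneousSubmodule (Fin n) k i :
      Submodule k (MvPolynomial (Fin n) k))

/-- Zariski closure of a subset of a `k`-vector space: common zeros of all polynomial
functions (elements of the subalgebra of functions generated by linear functionals)
vanishing on the subset. -/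
def zcl (k : Type*) {M : Type*} [Field k] [AddCommGroup M] [Module k M] (A : Set M) : Set M :=
  {p | ∀ F : M → k,
    F ∈ Algebra.adjoin k (Set.range fun φ : Module.Dual k M => (φ : M → k)) →
    (∀ a ∈ A, F a = 0) → F p = 0}

end

section Aux

set_option linter.unusedSectionVars false
set_option linter.unreachableTactic false
set_option linter.unusedTactic false

variable {k : Type*} [Field k]

theorem aux_contract_monomial {n : ℕ} (f : MvPolynomial (Fin n) k) (m : Fin n →₀ ℕ) (c : k) :
    contractMap f (monomial m c) = c • (monOp k m) f := by
  unfold contractMap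
  rw [LinearMap.comp_apply]
  erw [Finsupp.lsum_apply]
  show Finsupp.sum (Finsupp.single m c) _ = _
  rw [Finsupp.sum_single_index]
  · rfl
  · simp

theorem aux_XmulX (i j : Fin 5) : (X i * X j : MvPolynomial (Fin 5) k) =
    monomial (Finsupp.single i 1 + Finsupp.single j 1) 1 := by
  rw [MvPolynomial.X, MvPolynomial.X, monomial_mul, one_mul]

set_option maxHeartbeats 1000000 in
theorem aux_contract_XX (f : MvPolynomial (Fin 5) k) (i j : Fin 5) (hij : i ≤ j) :
    contractMap f (X i * X j) = (pderiv i) ((pderiv j) f) := by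
  rw [aux_XmulX, aux_contract_monomial, monOp, one_smul]
  fin_cases i <;> fin_cases j <;> first
  | exact absurd hij (by decide)
  | · simp only [List.ofFn_succ, Fin.isValue, List.prod_cons, List.ofFn_zero, List.prod_nil,
        Finsupp.add_apply, Finsupp.single_apply]
      norm_num [Fin.ext_iff]
      all_goals try first
        | rfl
        | (simp [LinearMap.mul_apply, pow_two]; try rfl)

theorem aux_degree_one_single {n : ℕ} (d : Fin n →₀ ℕ) (h : Finsupp.degree d = 1) :
    ∃ i, d = Finsupp.single i 1 := by
  classical
  have h0 : d ≠ 0 := by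
    rintro rfl
    simp at h
  obtain ⟨i, hi⟩ : ∃ i, d i ≠ 0 := by
    by_contra hc
    push_neg at hc
    exact h0 (Finsupp.ext fun a => hc a)
  refine ⟨i, ?_⟩
  have hle : ∀ j, d j ≤ 1 := fun j => h ▸ Finsupp.le_degree j d
  have hdi : d i = 1 := le_antisymm (hle i) (Nat.one_le_iff_ne_zero.mpr hi)
  ext j
  rcases eq_or_ne j i with rfl | hj
  · simp [hdi]
  · rw [Finsupp.single_apply, if_neg (fun e => hj e.symm)]
    by_contra hj0
    have hij : ({i, j} : Finset (Fin n)) ⊆ d.support := by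
      intro a ha
      simp only [Finset.mem_insert, Finset.mem_singleton] at ha
      rcases ha with rfl | rfl <;> simp [Finsupp.mem_support_iff, hi, hj0]
    have h2 : d i + d j ≤ Finsupp.degree d := by
      rw [show Finsupp.degree d = ∑ a ∈ d.support, d a from rfl]
      calc d i + d j = ∑ a ∈ ({i, j} : Finset (Fin n)), d a := by
            rw [Finset.sum_pair (fun e => hj e.symm)]
          _ ≤ _ := Finset.sum_le_sum_of_subset hij
    omega

theorem aux_homog1_eq_span {n : ℕ} :
    (homogeneousSubmodule (Fin n) k 1 : Submodule k (MvPolynomial (Fin n) k)) =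
      Submodule.span k (Set.range X) := by
  apply le_antisymm
  · intro p hp
    rw [mem_homogeneousSubmodule] at hp
    rw [p.as_sum]
    apply Submodule.sum_mem
    intro d hd
    have hc : coeff d p ≠ 0 := mem_support_iff.mp hd
    have hdeg : Finsupp.degree d = 1 := by
      have := hp hc
      rwa [Finsupp.degree_eq_weight_one]
    obtain ⟨i, rfl⟩ := aux_degree_one_single d hdeg
    have he : monomial (Finsupp.single i 1) (coeff (Finsupp.single i 1) p)
        = (coeff (Finsupp.single i 1) p) • X i := by
      rw [MvPolynomial.X, smul_monomial, smul_eq_mul, mul_one]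
    rw [he]
    exact Submodule.smul_mem _ _ (Submodule.subset_span ⟨i, rfl⟩)
  · rw [Submodule.span_le]
    rintro _ ⟨i, rfl⟩
    exact (mem_homogeneousSubmodule _ _).mpr (isHomogeneous_X _ _)

theorem aux_homog2 (i j : Fin 5) :
    (X i * X j : MvPolynomial (Fin 5) k) ∈ homogeneousSubmodule (Fin 5) k 2 :=
  (mem_homogeneousSubmodule _ _).mpr ((isHomogeneous_X k i).mul (isHomogeneous_X k j))

/-- The main membership result: each `βₗ` lies in the saturation. -/
theorem aux_main (l : Fin 5) (hl : 2 ≤ l.val) :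
    X l ∈ satur (Ideal.span
      ((LinearMap.ker (contractMap
          ((X 0) ^ 2 * X 2 - ((X 0) + (X 1)) ^ 2 * X 3 + (X 1) ^ 2 * X 4 : MvPolynomial (Fin 5) k))
        ⊓ homogeneousSubmodule (Fin 5) k 2 :
        Submodule k (MvPolynomial (Fin 5) k)) : Set (MvPolynomial (Fin 5) k))) := by
  set f : MvPolynomial (Fin 5) k :=
    (X 0) ^ 2 * X 2 - ((X 0) + (X 1)) ^ 2 * X 3 + (X 1) ^ 2 * X 4 with hF
  set I : Ideal (MvPolynomial (Fin 5) k) := Ideal.span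
      ((LinearMap.ker (contractMap f) ⊓ homogeneousSubmodule (Fin 5) k 2 :
        Submodule k (MvPolynomial (Fin 5) k)) : Set (MvPolynomial (Fin 5) k)) with hI
  have hgen : ∀ g : MvPolynomial (Fin 5) k, contractMap f g = 0 →
      g ∈ homogeneousSubmodule (Fin 5) k 2 → g ∈ I := fun g h1 h2 =>
    Ideal.subset_span (Submodule.mem_inf.mpr ⟨LinearMap.mem_ker.mpr h1, h2⟩)
  -- the four mixed generators of the apolar ideal in degree 2
  have hq1 : (X 1 * X 2 : MvPolynomial (Fin 5) k) ∈ I := by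
    refine hgen _ ?_ (aux_homog2 1 2)
    rw [aux_contract_XX _ _ _ (by decide), hF]
    simp [pderiv_mul, pderiv_pow, pderiv_X]
  have hq2 : (X 0 * X 4 : MvPolynomial (Fin 5) k) ∈ I := by
    refine hgen _ ?_ (aux_homog2 0 4)
    rw [aux_contract_XX _ _ _ (by decide), hF]
    simp [pderiv_mul, pderiv_pow, pderiv_X]
  have hq3 : (X 0 * X 3 - X 1 * X 3 : MvPolynomial (Fin 5) k) ∈ I := by
    refine hgen _ ?_ (Submodule.sub_mem _ (aux_homog2 0 3) (aux_homog2 1 3))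
    rw [map_sub, aux_contract_XX _ _ _ (by decide), aux_contract_XX _ _ _ (by decide), hF]
    simp [pderiv_mul, pderiv_pow, pderiv_X]
    try ring
  have hq4 : (X 0 * X 2 + X 0 * X 3 + X 1 * X 4 : MvPolynomial (Fin 5) k) ∈ I := by
    refine hgen _ ?_ (Submodule.add_mem _ (Submodule.add_mem _ (aux_homog2 0 2) (aux_homog2 0 3))
      (aux_homog2 1 4))
    rw [map_add, map_add, aux_contract_XX _ _ _ (by decide), aux_contract_XX _ _ _ (by decide),
      aux_contract_XX _ _ _ (by decide), hF]
    simp [pderiv_mul, pderiv_pow, pderiv_X]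
    try ring
  -- products of two dual y-variables annihilate f
  have hbb : ∀ u v : Fin 5, 2 ≤ u.val → 2 ≤ v.val →
      (X u * X v : MvPolynomial (Fin 5) k) ∈ I := by
    intro u v hu hv
    refine hgen _ ?_ (aux_homog2 u v)
    fin_cases u <;> fin_cases v <;> first
    | exact absurd hu (by decide)
    | exact absurd hv (by decide)
    | · rw [aux_contract_XX _ _ _ (by decide), hF]
        simp [pderiv_mul, pderiv_pow, pderiv_X]
    | · rw [mul_comm, aux_contract_XX _ _ _ (by decide), hF]
        simp [pderiv_mul, pderiv_pow, pderiv_X]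
  have hcomb : ∀ t c1 c2 c3 c4 : MvPolynomial (Fin 5) k,
      t = c1 * (X 1 * X 2) + c2 * (X 0 * X 4) + c3 * (X 0 * X 3 - X 1 * X 3)
        + c4 * (X 0 * X 2 + X 0 * X 3 + X 1 * X 4) → t ∈ I := by
    intro t c1 c2 c3 c4 e
    rw [e]
    exact add_mem (add_mem (add_mem (Ideal.mul_mem_left _ _ hq1) (Ideal.mul_mem_left _ _ hq2))
      (Ideal.mul_mem_left _ _ hq3)) (Ideal.mul_mem_left _ _ hq4)
  have hsmall : ∀ w : Fin 5, w.val < 2 → w = 0 ∨ w = 1 := by decide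
  have hbig : ∀ w : Fin 5, 2 ≤ w.val → w = 2 ∨ w = 3 ∨ w = 4 := by decide
  have key4 : ∀ i j m : Fin 5, ((X i * X j) * X m) * X l ∈ I := by
    intro i j m
    by_cases hi : 2 ≤ i.val
    · rw [show ((X i * X j) * X m) * X l = (X j * X m) * (X l * X i) by ring]
      exact Ideal.mul_mem_left _ _ (hbb l i hl hi)
    by_cases hj : 2 ≤ j.val
    · rw [show ((X i * X j) * X m) * X l = (X i * X m) * (X l * X j) by ring]
      exact Ideal.mul_mem_left _ _ (hbb l j hl hj)
    by_cases hm : 2 ≤ m.val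
    · rw [show ((X i * X j) * X m) * X l = (X i * X j) * (X l * X m) by ring]
      exact Ideal.mul_mem_left _ _ (hbb l m hl hm)
    push_neg at hi hj hm
    rcases hbig l hl with rfl | rfl | rfl
    · -- l = 2 : β₀
      rcases hsmall i hi with rfl | rfl <;> rcases hsmall j hj with rfl | rfl <;>
        rcases hsmall m hm with rfl | rfl
      · exact hcomb _ (X 0 * X 0) (X 1 * X 1 - X 0 * X 1) (-(X 0 * X 0)) (X 0 * X 0 - X 0 * X 1)
          (by ring)
      · exact hcomb _ (X 0 * X 0) 0 0 0 (by ring)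
      · exact hcomb _ (X 0 * X 0) 0 0 0 (by ring)
      · exact hcomb _ (X 0 * X 1) 0 0 0 (by ring)
      · exact hcomb _ (X 0 * X 0) 0 0 0 (by ring)
      · exact hcomb _ (X 0 * X 1) 0 0 0 (by ring)
      · exact hcomb _ (X 0 * X 1) 0 0 0 (by ring)
      · exact hcomb _ (X 1 * X 1) 0 0 0 (by ring)
    · -- l = 3 : β₁
      rcases hsmall i hi with rfl | rfl <;> rcases hsmall j hj with rfl | rfl <;>
        rcases hsmall m hm with rfl | rfl
      · exact hcomb _ (-(X 0 * X 0)) (-(X 1 * X 1)) (X 0 * X 0) (X 0 * X 1) (by ring)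
      · exact hcomb _ (-(X 0 * X 0)) (-(X 1 * X 1)) 0 (X 0 * X 1) (by ring)
      · exact hcomb _ (-(X 0 * X 0)) (-(X 1 * X 1)) 0 (X 0 * X 1) (by ring)
      · exact hcomb _ (-(X 0 * X 0)) (-(X 1 * X 1)) (-(X 0 * X 1)) (X 0 * X 1) (by ring)
      · exact hcomb _ (-(X 0 * X 0)) (-(X 1 * X 1)) 0 (X 0 * X 1) (by ring)
      · exact hcomb _ (-(X 0 * X 0)) (-(X 1 * X 1)) (-(X 0 * X 1)) (X 0 * X 1) (by ring)
      · exact hcomb _ (-(X 0 * X 0)) (-(X 1 * X 1)) (-(X 0 * X 1)) (X 0 * X 1) (by ring)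
      · exact hcomb _ (-(X 0 * X 0)) (-(X 1 * X 1)) (-(X 0 * X 1 + X 1 * X 1)) (X 0 * X 1)
          (by ring)
    · -- l = 4 : β₂
      rcases hsmall i hi with rfl | rfl <;> rcases hsmall j hj with rfl | rfl <;>
        rcases hsmall m hm with rfl | rfl
      · exact hcomb _ 0 (X 0 * X 0) 0 0 (by ring)
      · exact hcomb _ 0 (X 0 * X 1) 0 0 (by ring)
      · exact hcomb _ 0 (X 0 * X 1) 0 0 (by ring)
      · exact hcomb _ 0 (X 1 * X 1) 0 0 (by ring)
      · exact hcomb _ 0 (X 0 * X 1) 0 0 (by ring)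
      · exact hcomb _ 0 (X 1 * X 1) 0 0 (by ring)
      · exact hcomb _ 0 (X 1 * X 1) 0 0 (by ring)
      · exact hcomb _ (X 0 * X 0 - X 0 * X 1) (X 1 * X 1) (X 0 * X 1) (X 1 * X 1 - X 0 * X 1)
          (by ring)
  -- conclude via the colon ideal with the cube of the irrelevant ideal
  have hmem : X l ∈ Submodule.colon I
      ((irrel k 5 ^ 3 : Ideal (MvPolynomial (Fin 5) k)) : Submodule _ _) := by
    rw [Submodule.mem_colon]
    intro p hp
    rw [smul_eq_mul]
    have hpow : (irrel k 5) ^ 3 = Ideal.span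
        ((Set.range (X : Fin 5 → MvPolynomial (Fin 5) k) *
          Set.range (X : Fin 5 → MvPolynomial (Fin 5) k)) *
          Set.range (X : Fin 5 → MvPolynomial (Fin 5) k)) := by
      rw [irrel, pow_succ, pow_succ, pow_one, Ideal.span_mul_span', Ideal.span_mul_span']
    rw [hpow] at hp
    have hK : Ideal.span
        ((Set.range (X : Fin 5 → MvPolynomial (Fin 5) k) *
          Set.range (X : Fin 5 → MvPolynomial (Fin 5) k)) *
          Set.range (X : Fin 5 → MvPolynomial (Fin 5) k)) ≤
        Submodule.colon I ((Ideal.span {X l} : Ideal (MvPolynomial (Fin 5) k)) : Submodule _ _) := by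
      rw [Ideal.span_le]
      rintro _ ⟨_, ⟨a, ⟨i, rfl⟩, b, ⟨j, rfl⟩, rfl⟩, c, ⟨m, rfl⟩, rfl⟩
      rw [SetLike.mem_coe, Ideal.mem_colon_span_singleton]
      exact key4 i j m
    have h2 := hK hp
    rw [Ideal.mem_colon_span_singleton] at h2
    rwa [mul_comm]
  exact Submodule.mem_iSup_of_mem 3 hmem

end Aux

/-- with `J` the saturation of the ideal generated by the degree 2 part of
the apolar ideal of `f = x₀²y₀ − (x₀+x₁)²y₁ + x₁²y₂`, we have `β₀, β₁, β₂ ∈ J`, and the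
Hilbert function of `Sym V⋆ / J` in degree 1 is at most 2. -/
theorem stmt4 (k : Type*) [Field k] [IsAlgClosed k] [CharZero k] :
    let x0 : MvPolynomial (Fin 5) k := X 0
    let x1 : MvPolynomial (Fin 5) k := X 1
    let y0 : MvPolynomial (Fin 5) k := X 2
    let y1 : MvPolynomial (Fin 5) k := X 3
    let y2 : MvPolynomial (Fin 5) k := X 4
    let f := x0 ^ 2 * y0 - (x0 + x1) ^ 2 * y1 + x1 ^ 2 * y2
    let b0 : MvPolynomial (Fin 5) k := X 2
    let b1 : MvPolynomial (Fin 5) k := X 3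
    let b2 : MvPolynomial (Fin 5) k := X 4
    let J : Ideal (MvPolynomial (Fin 5) k) :=
      satur (Ideal.span ((LinearMap.ker (contractMap f) ⊓ homogeneousSubmodule (Fin 5) k 2 :
        Submodule k (MvPolynomial (Fin 5) k)) : Set (MvPolynomial (Fin 5) k)))
    b0 ∈ J ∧ b1 ∈ J ∧ b2 ∈ J ∧ HFq k J 1 ≤ 2 := by
  intro x0 x1 y0 y1 y2 f b0 b1 b2 J
  have h0 : b0 ∈ J := aux_main 2 (by decide)
  have h1 : b1 ∈ J := aux_main 3 (by decide)
  have h2 : b2 ∈ J := aux_main 4 (by decide)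
  refine ⟨h0, h1, h2, ?_⟩
  -- Hilbert function bound
  have hfd : FiniteDimensional k (homogeneousSubmodule (Fin 5) k 1 :
      Submodule k (MvPolynomial (Fin 5) k)) := by
    rw [aux_homog1_eq_span]
    exact FiniteDimensional.span_of_finite k (Set.finite_range X)
  have h5 : Module.finrank k (homogeneousSubmodule (Fin 5) k 1 :
      Submodule k (MvPolynomial (Fin 5) k)) = 5 := by
    rw [aux_homog1_eq_span, finrank_span_eq_card (linearIndependent_X _ _)]
    simp
  set T : Submodule k (MvPolynomial (Fin 5) k) :=
    Submodule.restrictScalars k J ⊓ homogeneousSubmodule (Fin 5) k 1 with hT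
  have hfdT : FiniteDimensional k T := Submodule.finiteDimensional_of_le inf_le_right
  have hvli : LinearIndependent k ((X : Fin 5 → MvPolynomial (Fin 5) k) ∘ ![2, 3, 4]) :=
    (linearIndependent_X _ _).comp _ (by decide)
  have hWle : Submodule.span k (Set.range ((X : Fin 5 → MvPolynomial (Fin 5) k) ∘ ![2, 3, 4]))
      ≤ T := by
    rw [Submodule.span_le]
    rintro _ ⟨t, rfl⟩
    fin_cases t
    · exact ⟨h0, (mem_homogeneousSubmodule _ _).mpr (isHomogeneous_X _ _)⟩
    · exact ⟨h1, (mem_homogeneousSubmodule _ _).mpr (isHomogeneous_X _ _)⟩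
    · exact ⟨h2, (mem_homogeneousSubmodule _ _).mpr (isHomogeneous_X _ _)⟩
  have hW : Module.finrank k (Submodule.span k
      (Set.range ((X : Fin 5 → MvPolynomial (Fin 5) k) ∘ ![2, 3, 4]))) = 3 := by
    rw [finrank_span_eq_card hvli]
    simp
  have h3 : 3 ≤ Module.finrank k T := hW ▸ Submodule.finrank_mono hWle
  show Module.finrank k (homogeneousSubmodule (Fin 5) k 1 :
      Submodule k (MvPolynomial (Fin 5) k)) - Module.finrank k T ≤ 2
  omega
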